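/- arXiv:1805.11713 — 2 statements merged into one kernel-verified Lean document; each statement's English description precedes it below -/
import Mathlib

section
/- (Theorem 4.3, algebraic form) Suppose A is a real s×s matrix such that det(I_{sm} − h·M^{(1)}(A;F^{(1)})) = det(exp(h·K_{11}))·det(I_{sm} + h·M^{(1)}(Aᵀ;F^{(1)})), and suppose there exists an invertible real n×n matrix P with P·K_{22}·P^{−1} = −K_{22}ᵀ and P·F_i^{(2)}·P^{−1} = −(F_i^{(2)})ᵀ for all i = 1,…,s. Then det(I_{s(m+n)} − h·M(A;F)) = det(exp(h·K))·det(I_{s(m+n)} + h·M(Aᵀ;F)). -/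
open Matrix NormedSpace

lemma thm43_exp_smul_add {ι : Type*} [Fintype ι] [DecidableEq ι] (X : Matrix ι ι ℝ) (a b : ℝ) :
    exp ((a + b) • X) = exp (a • X) * exp (b • X) := by
  rw [add_smul]
  exact Matrix.exp_add_of_commute _ _ (((Commute.refl X).smul_left a).smul_right b)

lemma thm43_exp_cancel {ι : Type*} [Fintype ι] [DecidableEq ι] (X : Matrix ι ι ℝ) (a : ℝ) :
    exp (a • X) * exp ((-a) • X) = 1 := by
  rw [← thm43_exp_smul_add, add_neg_cancel, zero_smul, exp_zero]

lemma thm43_fromBlocks_pow {m n : ℕ} (X : Matrix (Fin m) (Fin m) ℝ)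
    (Y : Matrix (Fin n) (Fin n) ℝ) (k : ℕ) :
    (fromBlocks X 0 0 Y) ^ k = fromBlocks (X ^ k) 0 0 (Y ^ k) := by
  induction k with
  | zero => simp [← fromBlocks_one]
  | succ k ih => rw [pow_succ, pow_succ, pow_succ, ih, fromBlocks_multiply]; simp

lemma thm43_exp_fromBlocks {m n : ℕ} (X : Matrix (Fin m) (Fin m) ℝ)
    (Y : Matrix (Fin n) (Fin n) ℝ) :
    exp (fromBlocks X 0 0 Y) = fromBlocks (exp X) 0 0 (exp Y) := by
  letI : SeminormedRing (Matrix (Fin m ⊕ Fin n) (Fin m ⊕ Fin n) ℝ) :=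
    Matrix.linftyOpSemiNormedRing
  letI : NormedRing (Matrix (Fin m ⊕ Fin n) (Fin m ⊕ Fin n) ℝ) := Matrix.linftyOpNormedRing
  letI : NormedAlgebra ℝ (Matrix (Fin m ⊕ Fin n) (Fin m ⊕ Fin n) ℝ) :=
    Matrix.linftyOpNormedAlgebra
  letI : SeminormedRing (Matrix (Fin m) (Fin m) ℝ) := Matrix.linftyOpSemiNormedRing
  letI : NormedRing (Matrix (Fin m) (Fin m) ℝ) := Matrix.linftyOpNormedRing
  letI : NormedAlgebra ℝ (Matrix (Fin m) (Fin m) ℝ) := Matrix.linftyOpNormedAlgebra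
  letI : SeminormedRing (Matrix (Fin n) (Fin n) ℝ) := Matrix.linftyOpSemiNormedRing
  letI : NormedRing (Matrix (Fin n) (Fin n) ℝ) := Matrix.linftyOpNormedRing
  letI : NormedAlgebra ℝ (Matrix (Fin n) (Fin n) ℝ) := Matrix.linftyOpNormedAlgebra
  set M : Matrix (Fin m ⊕ Fin n) (Fin m ⊕ Fin n) ℝ := fromBlocks X 0 0 Y with hM
  have hsum : HasSum (fun k : ℕ => ((k.factorial : ℝ)⁻¹) • M ^ k) (exp M) :=
    exp_series_hasSum_exp' M
  let L11 : Matrix (Fin m ⊕ Fin n) (Fin m ⊕ Fin n) ℝ →ₗ[ℝ] Matrix (Fin m) (Fin m) ℝ :=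
    { toFun := Matrix.toBlocks₁₁, map_add' := fun _ _ => rfl, map_smul' := fun _ _ => rfl }
  let L12 : Matrix (Fin m ⊕ Fin n) (Fin m ⊕ Fin n) ℝ →ₗ[ℝ] Matrix (Fin m) (Fin n) ℝ :=
    { toFun := Matrix.toBlocks₁₂, map_add' := fun _ _ => rfl, map_smul' := fun _ _ => rfl }
  let L21 : Matrix (Fin m ⊕ Fin n) (Fin m ⊕ Fin n) ℝ →ₗ[ℝ] Matrix (Fin n) (Fin m) ℝ :=
    { toFun := Matrix.toBlocks₂₁, map_add' := fun _ _ => rfl, map_smul' := fun _ _ => rfl }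
  let L22 : Matrix (Fin m ⊕ Fin n) (Fin m ⊕ Fin n) ℝ →ₗ[ℝ] Matrix (Fin n) (Fin n) ℝ :=
    { toFun := Matrix.toBlocks₂₂, map_add' := fun _ _ => rfl, map_smul' := fun _ _ => rfl }
  have h11 : HasSum (fun k : ℕ => L11 (((k.factorial : ℝ)⁻¹) • M ^ k)) (L11 (exp M)) :=
    hsum.mapL ⟨L11, L11.continuous_of_finiteDimensional⟩
  have h12 : HasSum (fun k : ℕ => L12 (((k.factorial : ℝ)⁻¹) • M ^ k)) (L12 (exp M)) :=
    hsum.mapL ⟨L12, L12.continuous_of_finiteDimensional⟩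
  have h21 : HasSum (fun k : ℕ => L21 (((k.factorial : ℝ)⁻¹) • M ^ k)) (L21 (exp M)) :=
    hsum.mapL ⟨L21, L21.continuous_of_finiteDimensional⟩
  have h22 : HasSum (fun k : ℕ => L22 (((k.factorial : ℝ)⁻¹) • M ^ k)) (L22 (exp M)) :=
    hsum.mapL ⟨L22, L22.continuous_of_finiteDimensional⟩
  have e11 : (exp M).toBlocks₁₁ = exp X := by
    refine HasSum.unique ?_ (exp_series_hasSum_exp' (𝕂 := ℝ) X)
    have h11' : HasSum (fun k : ℕ => (((k.factorial : ℝ)⁻¹) • M ^ k).toBlocks₁₁) (exp M).toBlocks₁₁ :=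
      h11
    simp only [hM, thm43_fromBlocks_pow, Matrix.fromBlocks_smul, toBlocks_fromBlocks₁₁] at h11'
    exact h11'
  have e22 : (exp M).toBlocks₂₂ = exp Y := by
    refine HasSum.unique ?_ (exp_series_hasSum_exp' (𝕂 := ℝ) Y)
    have h22' : HasSum (fun k : ℕ => (((k.factorial : ℝ)⁻¹) • M ^ k).toBlocks₂₂) (exp M).toBlocks₂₂ :=
      h22
    simp only [hM, thm43_fromBlocks_pow, Matrix.fromBlocks_smul, toBlocks_fromBlocks₂₂] at h22'
    exact h22'
  have e12 : (exp M).toBlocks₁₂ = 0 := by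
    refine HasSum.unique ?_ (hasSum_zero (β := ℕ) (L := SummationFilter.unconditional ℕ) (α := Matrix (Fin m) (Fin n) ℝ))
    have h12' : HasSum (fun k : ℕ => (((k.factorial : ℝ)⁻¹) • M ^ k).toBlocks₁₂) (exp M).toBlocks₁₂ :=
      h12
    simp only [hM, thm43_fromBlocks_pow, Matrix.fromBlocks_smul, toBlocks_fromBlocks₁₂, smul_zero] at h12'
    exact h12'
  have e21 : (exp M).toBlocks₂₁ = 0 := by
    refine HasSum.unique ?_ (hasSum_zero (β := ℕ) (L := SummationFilter.unconditional ℕ) (α := Matrix (Fin n) (Fin m) ℝ))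
    have h21' : HasSum (fun k : ℕ => (((k.factorial : ℝ)⁻¹) • M ^ k).toBlocks₂₁) (exp M).toBlocks₂₁ :=
      h21
    simp only [hM, thm43_fromBlocks_pow, Matrix.fromBlocks_smul, toBlocks_fromBlocks₂₁, smul_zero] at h21'
    exact h21'
  conv_lhs => rw [← fromBlocks_toBlocks (exp M)]
  rw [e11, e12, e21, e22]

/-- The block matrix `M(A;F)` whose `(i,j)` block is `a_{ij}·exp((c_i−c_j)·h·K)·F_j`. -/
noncomputable def Mblk {ι : Type*} [Fintype ι] [DecidableEq ι] {s : ℕ} (h : ℝ)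
    (K : Matrix ι ι ℝ) (c : Fin s → ℝ) (A : Matrix (Fin s) (Fin s) ℝ)
    (F : Fin s → Matrix ι ι ℝ) : Matrix (Fin s × ι) (Fin s × ι) ℝ :=
  fun p q => A p.1 q.1 * (NormedSpace.exp (((c p.1 - c q.1) * h) • K) * F q.1) p.2 q.2
section BM

variable {s N : ℕ}

/-- matrix built from an `s × s` array of `N × N` blocks -/
def bm (B : Fin s → Fin s → Matrix (Fin N) (Fin N) ℝ) :
    Matrix (Fin s × Fin N) (Fin s × Fin N) ℝ :=
  fun p q => B p.1 q.1 p.2 q.2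

lemma bm_ext {B C : Fin s → Fin s → Matrix (Fin N) (Fin N) ℝ}
    (h : ∀ i j, B i j = C i j) : bm B = bm C := by
  funext p q; rw [bm, bm, h]

lemma bm_mul (B C : Fin s → Fin s → Matrix (Fin N) (Fin N) ℝ) :
    bm B * bm C = bm (fun i j => ∑ k, B i k * C k j) := by
  ext ⟨i, p⟩ ⟨j, q⟩
  simp only [bm, Matrix.mul_apply, Matrix.sum_apply, Fintype.sum_prod_type]

lemma bm_one : bm (fun i j : Fin s => if i = j then (1 : Matrix (Fin N) (Fin N) ℝ) else 0) = 1 := by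
  ext ⟨i, p⟩ ⟨j, q⟩
  by_cases hij : i = j <;>
    simp [bm, hij, Matrix.one_apply, Prod.ext_iff]

lemma bm_add (B C : Fin s → Fin s → Matrix (Fin N) (Fin N) ℝ) :
    bm B + bm C = bm (fun i j => B i j + C i j) := rfl

lemma bm_sub (B C : Fin s → Fin s → Matrix (Fin N) (Fin N) ℝ) :
    bm B - bm C = bm (fun i j => B i j - C i j) := rfl

lemma bm_smul (t : ℝ) (B : Fin s → Fin s → Matrix (Fin N) (Fin N) ℝ) :
    t • bm B = bm (fun i j => t • B i j) := rfl

lemma bm_neg (B : Fin s → Fin s → Matrix (Fin N) (Fin N) ℝ) :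
    -bm B = bm (fun i j => -(B i j)) := rfl

lemma bm_transpose (B : Fin s → Fin s → Matrix (Fin N) (Fin N) ℝ) :
    (bm B)ᵀ = bm (fun i j => (B j i)ᵀ) := rfl

/-- block diagonal -/
def bd (d : Fin s → Matrix (Fin N) (Fin N) ℝ) : Matrix (Fin s × Fin N) (Fin s × Fin N) ℝ :=
  bm (fun i j => if i = j then d i else 0)

lemma bd_mul_bm (d : Fin s → Matrix (Fin N) (Fin N) ℝ)
    (B : Fin s → Fin s → Matrix (Fin N) (Fin N) ℝ) :
    bd d * bm B = bm (fun i j => d i * B i j) := by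
  rw [bd, bm_mul]
  refine bm_ext fun i j => ?_
  simp [ite_mul, zero_mul, Finset.sum_ite_eq]

lemma bm_mul_bd (B : Fin s → Fin s → Matrix (Fin N) (Fin N) ℝ)
    (d : Fin s → Matrix (Fin N) (Fin N) ℝ) :
    bm B * bd d = bm (fun i j => B i j * d j) := by
  rw [bd, bm_mul]
  refine bm_ext fun i j => ?_
  simp [mul_ite, mul_zero, Finset.sum_ite_eq']

lemma bd_mul_bd (d e : Fin s → Matrix (Fin N) (Fin N) ℝ) :
    bd d * bd e = bd (fun i => d i * e i) := by
  have := bd_mul_bm d (fun i j => if i = j then e i else 0)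
  rw [bd, bd] at *
  rw [this]
  refine bm_ext fun i j => ?_
  by_cases hij : i = j <;> simp [hij]

lemma bd_mul_bd_one {d e : Fin s → Matrix (Fin N) (Fin N) ℝ}
    (h : ∀ i, d i * e i = 1) : bd d * bd e = 1 := by
  rw [bd_mul_bd, ← bm_one, bd]
  exact bm_ext fun i j => by simp [h]

lemma Mblk_eq_bm (h : ℝ) (K22 : Matrix (Fin N) (Fin N) ℝ) (c : Fin s → ℝ)
    (A : Matrix (Fin s) (Fin s) ℝ) (F2 : Fin s → Matrix (Fin N) (Fin N) ℝ) :
    Mblk h K22 c A F2 =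
      bm (fun i j => A i j • (NormedSpace.exp (((c i - c j) * h) • K22) * F2 j)) := by
  ext ⟨i, p⟩ ⟨j, q⟩
  simp [Mblk, bm]

end BM
lemma thm43_det_skew {n s : ℕ} (h : ℝ) (c : Fin s → ℝ) (K22 : Matrix (Fin n) (Fin n) ℝ)
    (F2 : Fin s → Matrix (Fin n) (Fin n) ℝ) (A : Matrix (Fin s) (Fin s) ℝ)
    (P : Matrix (Fin n) (Fin n) ℝ) (hP : IsUnit P)
    (hK22 : P * K22 * P⁻¹ = -K22ᵀ) (hF2 : ∀ i, P * F2 i * P⁻¹ = -(F2 i)ᵀ) :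
    ((1 : Matrix (Fin s × Fin n) (Fin s × Fin n) ℝ) - h • Mblk h K22 c A F2).det =
      ((1 : Matrix (Fin s × Fin n) (Fin s × Fin n) ℝ) + h • Mblk h K22 c Aᵀ F2).det := by
  have hPdet : IsUnit P.det := (Matrix.isUnit_iff_isUnit_det P).mp hP
  have hPP : P * P⁻¹ = 1 := Matrix.mul_nonsing_inv P hPdet
  have hPP' : P⁻¹ * P = 1 := Matrix.nonsing_inv_mul P hPdet
  set E : Fin s → Matrix (Fin n) (Fin n) ℝ :=
    fun t => NormedSpace.exp ((c t * h) • K22) with hE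
  set E' : Fin s → Matrix (Fin n) (Fin n) ℝ :=
    fun t => NormedSpace.exp ((-(c t * h)) • K22) with hE'
  have hEE' : ∀ t, E t * E' t = 1 := fun t => thm43_exp_cancel K22 (c t * h)
  have hE'E : ∀ t, E' t * E t = 1 := by
    intro t
    have := thm43_exp_cancel K22 (-(c t * h))
    rw [neg_neg] at this
    exact this
  have hsplit : ∀ i j : Fin s,
      NormedSpace.exp (((c i - c j) * h) • K22) = E i * E' j := by
    intro i j
    have hx : (c i - c j) * h = c i * h + -(c j * h) := by ring
    simp only [hE, hE']
    rw [hx, thm43_exp_smul_add]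
  have hPexp : ∀ x : ℝ,
      P * NormedSpace.exp (x • K22) = (NormedSpace.exp ((-x) • K22))ᵀ * P := by
    intro x
    have h2 := Matrix.exp_conj P (x • K22) hP
    have h1 : P * (x • K22) * P⁻¹ = ((-x) • K22)ᵀ := by
      rw [mul_smul_comm, smul_mul_assoc, hK22, Matrix.transpose_smul, smul_neg, neg_smul]
    rw [h1, Matrix.exp_transpose] at h2
    rw [h2, mul_assoc, hPP', mul_one]
  have hPF : ∀ i, P * F2 i = -(F2 i)ᵀ * P := by
    intro i
    calc P * F2 i = P * F2 i * P⁻¹ * P := by rw [mul_assoc, hPP', mul_one]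
    _ = -(F2 i)ᵀ * P := by rw [hF2 i]
  have hPE' : ∀ t, P * E' t = (E t)ᵀ * P := by
    intro t
    have := hPexp (-(c t * h))
    rw [neg_neg] at this
    exact this
  have hPE : ∀ t, P * E t = (E' t)ᵀ * P := fun t => hPexp (c t * h)
  set H : Fin s → Matrix (Fin n) (Fin n) ℝ := fun j => E' j * F2 j * E j with hH
  have hPH : ∀ j, P * H j * P⁻¹ = -(H j)ᵀ := by
    intro j
    have key : P * H j = -(H j)ᵀ * P := by
      show P * (E' j * F2 j * E j) = -(E' j * F2 j * E j)ᵀ * P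
      calc P * (E' j * F2 j * E j)
          = ((P * E' j) * F2 j) * E j := by simp only [Matrix.mul_assoc]
        _ = (((E j)ᵀ * P) * F2 j) * E j := by rw [hPE']
        _ = ((E j)ᵀ * (P * F2 j)) * E j := by simp only [Matrix.mul_assoc]
        _ = ((E j)ᵀ * (-(F2 j)ᵀ * P)) * E j := by rw [hPF]
        _ = ((E j)ᵀ * -(F2 j)ᵀ) * (P * E j) := by simp only [Matrix.mul_assoc]
        _ = ((E j)ᵀ * -(F2 j)ᵀ) * ((E' j)ᵀ * P) := by rw [hPE]
        _ = -(E' j * F2 j * E j)ᵀ * P := by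
            simp only [Matrix.transpose_mul, Matrix.mul_assoc, Matrix.neg_mul, Matrix.mul_neg]
    rw [key, mul_assoc, hPP, mul_one]
  have hMA : Mblk h K22 c A F2 = bm (fun i j => A i j • (E i * E' j * F2 j)) := by
    rw [Mblk_eq_bm]
    exact bm_ext fun i j => by rw [hsplit]
  set D1 := bd (fun i => P * E' i) with hD1
  set D2 := bd (fun i => E i * P⁻¹) with hD2
  have hD12 : D1 * D2 = 1 := bd_mul_bd_one (fun i => by
    calc (P * E' i) * (E i * P⁻¹) = P * ((E' i * E i) * P⁻¹) := by simp only [Matrix.mul_assoc]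
      _ = 1 := by rw [hE'E, one_mul, hPP])
  have hdet12 : D1.det * D2.det = 1 := by rw [← Matrix.det_mul, hD12, Matrix.det_one]
  have hconj1 : D1 * ((1 : Matrix (Fin s × Fin n) (Fin s × Fin n) ℝ)
        - h • Mblk h K22 c A F2) * D2
      = 1 + h • bm (fun i j => A i j • (H j)ᵀ) := by
    have hmid : D1 * Mblk h K22 c A F2 * D2 = bm (fun i j => -(A i j • (H j)ᵀ)) := by
      rw [hMA, hD1, hD2, bd_mul_bm, bm_mul_bd]
      refine bm_ext fun i j => ?_
      have hmm : (P * E' i) * (A i j • (E i * E' j * F2 j)) * (E j * P⁻¹)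
          = A i j • (P * H j * P⁻¹) := by
        rw [mul_smul_comm, smul_mul_assoc]
        congr 1
        calc (P * E' i) * (E i * E' j * F2 j) * (E j * P⁻¹)
            = P * ((E' i * E i) * (E' j * (F2 j * (E j * P⁻¹)))) := by
              simp only [Matrix.mul_assoc]
          _ = P * (E' j * (F2 j * (E j * P⁻¹))) := by rw [hE'E, one_mul]
          _ = P * H j * P⁻¹ := by
              show _ = P * (E' j * F2 j * E j) * P⁻¹
              simp only [Matrix.mul_assoc]
      rw [hmm, hPH, smul_neg]
    calc D1 * ((1 : Matrix (Fin s × Fin n) (Fin s × Fin n) ℝ)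
          - h • Mblk h K22 c A F2) * D2
        = D1 * D2 - h • (D1 * Mblk h K22 c A F2 * D2) := by
          rw [mul_sub, mul_one, mul_smul_comm, sub_mul, smul_mul_assoc]
      _ = 1 - h • bm (fun i j => -(A i j • (H j)ᵀ)) := by rw [hD12, hmid]
      _ = 1 + h • bm (fun i j => A i j • (H j)ᵀ) := by
          rw [← bm_neg, smul_neg, sub_neg_eq_add]
  have det1 : ((1 : Matrix (Fin s × Fin n) (Fin s × Fin n) ℝ)
        - h • Mblk h K22 c A F2).det
      = ((1 : Matrix (Fin s × Fin n) (Fin s × Fin n) ℝ)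
        + h • bm (fun i j => A i j • (H j)ᵀ)).det := by
    have hdc : (D1 * ((1 : Matrix (Fin s × Fin n) (Fin s × Fin n) ℝ)
          - h • Mblk h K22 c A F2) * D2).det
        = ((1 : Matrix (Fin s × Fin n) (Fin s × Fin n) ℝ)
          - h • Mblk h K22 c A F2).det := by
      rw [Matrix.det_mul, Matrix.det_mul, mul_comm D1.det, mul_assoc, hdet12, mul_one]
    rw [← hdc, hconj1]
  have det2 : ((1 : Matrix (Fin s × Fin n) (Fin s × Fin n) ℝ)
        + h • bm (fun i j => A i j • (H j)ᵀ)).det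
      = ((1 : Matrix (Fin s × Fin n) (Fin s × Fin n) ℝ)
        + h • bm (fun i j => A j i • H i)).det := by
    have htr : ((1 : Matrix (Fin s × Fin n) (Fin s × Fin n) ℝ)
          + h • bm (fun i j => A i j • (H j)ᵀ))ᵀ
        = 1 + h • bm (fun i j => A j i • H i) := by
      rw [Matrix.transpose_add, Matrix.transpose_one, Matrix.transpose_smul, bm_transpose]
      congr 1
    rw [← Matrix.det_transpose, htr]
  have det3 : ((1 : Matrix (Fin s × Fin n) (Fin s × Fin n) ℝ)
        + h • bm (fun i j => A j i • H i)).det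
      = ((1 : Matrix (Fin s × Fin n) (Fin s × Fin n) ℝ)
        + h • bm (fun i j => A j i • H j)).det := by
    have hXY : bm (fun i j => A j i • H i)
        = bd H * bm (fun i j => A j i • (1 : Matrix (Fin n) (Fin n) ℝ)) := by
      rw [bd_mul_bm]
      exact bm_ext fun i j => by rw [mul_smul_comm, mul_one]
    have hYX : bm (fun i j => A j i • (1 : Matrix (Fin n) (Fin n) ℝ)) * bd H
        = bm (fun i j => A j i • H j) := by
      rw [bm_mul_bd]
      exact bm_ext fun i j => by rw [smul_mul_assoc, one_mul]
    rw [hXY, ← mul_smul_comm, Matrix.det_one_add_mul_comm, smul_mul_assoc, hYX]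
  have hD34 : bd E * bd E' = 1 := bd_mul_bd_one hEE'
  have hdet34 : (bd E).det * (bd E').det = 1 := by
    rw [← Matrix.det_mul, hD34, Matrix.det_one]
  have hMAT : Mblk h K22 c Aᵀ F2 = bm (fun i j => A j i • (E i * E' j * F2 j)) := by
    rw [Mblk_eq_bm]
    exact bm_ext fun i j => by rw [hsplit, Matrix.transpose_apply]
  have hconj2 : bd E * ((1 : Matrix (Fin s × Fin n) (Fin s × Fin n) ℝ)
        + h • bm (fun i j => A j i • H j)) * bd E'
      = 1 + h • Mblk h K22 c Aᵀ F2 := by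
    have hmid : bd E * bm (fun i j => A j i • H j) * bd E'
        = bm (fun i j => A j i • (E i * E' j * F2 j)) := by
      rw [bd_mul_bm, bm_mul_bd]
      refine bm_ext fun i j => ?_
      rw [mul_smul_comm, smul_mul_assoc]
      congr 1
      show E i * (E' j * F2 j * E j) * E' j = E i * E' j * F2 j
      calc E i * (E' j * F2 j * E j) * E' j
          = E i * (E' j * (F2 j * (E j * E' j))) := by simp only [Matrix.mul_assoc]
        _ = E i * E' j * F2 j := by rw [hEE', mul_one, ← Matrix.mul_assoc]
    calc bd E * ((1 : Matrix (Fin s × Fin n) (Fin s × Fin n) ℝ)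
          + h • bm (fun i j => A j i • H j)) * bd E'
        = bd E * bd E' + h • (bd E * bm (fun i j => A j i • H j) * bd E') := by
          rw [mul_add, mul_one, mul_smul_comm, add_mul, smul_mul_assoc]
      _ = 1 + h • Mblk h K22 c Aᵀ F2 := by rw [hD34, hmid, hMAT]
  have det4 : ((1 : Matrix (Fin s × Fin n) (Fin s × Fin n) ℝ)
        + h • bm (fun i j => A j i • H j)).det
      = ((1 : Matrix (Fin s × Fin n) (Fin s × Fin n) ℝ) + h • Mblk h K22 c Aᵀ F2).det := by
    have hdc : (bd E * ((1 : Matrix (Fin s × Fin n) (Fin s × Fin n) ℝ)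
          + h • bm (fun i j => A j i • H j)) * bd E').det
        = ((1 : Matrix (Fin s × Fin n) (Fin s × Fin n) ℝ)
          + h • bm (fun i j => A j i • H j)).det := by
      rw [Matrix.det_mul, Matrix.det_mul, mul_comm (bd E).det, mul_assoc, hdet34, mul_one]
    rw [← hdc, hconj2]
  rw [det1, det2, det3, det4]
lemma thm43_det_exp_one {n : ℕ} (h : ℝ) (K22 : Matrix (Fin n) (Fin n) ℝ)
    (P : Matrix (Fin n) (Fin n) ℝ) (hP : IsUnit P) (hK22 : P * K22 * P⁻¹ = -K22ᵀ) :
    (NormedSpace.exp (h • K22)).det = 1 := by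
  have h1 : NormedSpace.exp (h • K22) * NormedSpace.exp ((-h) • K22) = 1 :=
    thm43_exp_cancel K22 h
  have hconj := Matrix.exp_conj P (h • K22) hP
  have h2 : P * (h • K22) * P⁻¹ = ((-h) • K22)ᵀ := by
    rw [mul_smul_comm, smul_mul_assoc, hK22, Matrix.transpose_smul, smul_neg, neg_smul]
  rw [h2, Matrix.exp_transpose] at hconj
  have h3 : (NormedSpace.exp ((-h) • K22)).det = (NormedSpace.exp (h • K22)).det := by
    conv_lhs => rw [← Matrix.det_transpose]
    rw [hconj, Matrix.det_conj hP]
  have h4 : (NormedSpace.exp (h • K22)).det * (NormedSpace.exp ((-h) • K22)).det = 1 := by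
    rw [← Matrix.det_mul, h1, Matrix.det_one]
  rw [h3] at h4
  have h5 : 0 ≤ (NormedSpace.exp (h • K22)).det := by
    have e2 := thm43_exp_smul_add K22 (h / 2) (h / 2)
    rw [show h / 2 + h / 2 = h by ring] at e2
    rw [e2, Matrix.det_mul]
    exact mul_self_nonneg _
  rcases mul_self_eq_one_iff.mp h4 with h6 | h6
  · exact h6
  · linarith

def thm43_equiv (s m n : ℕ) : (Fin s × Fin m) ⊕ (Fin s × Fin n) ≃ Fin s × (Fin m ⊕ Fin n) where
  toFun := Sum.elim (fun x => (x.1, Sum.inl x.2)) (fun x => (x.1, Sum.inr x.2))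
  invFun := fun x => Sum.elim (fun p => Sum.inl (x.1, p)) (fun q => Sum.inr (x.1, q)) x.2
  left_inv := by rintro (⟨i, p⟩ | ⟨i, q⟩) <;> rfl
  right_inv := by rintro ⟨i, p | q⟩ <;> rfl

lemma thm43_smul_fromBlocks {m n : ℕ} (x : ℝ) (K11 : Matrix (Fin m) (Fin m) ℝ)
    (K22 : Matrix (Fin n) (Fin n) ℝ) :
    x • (fromBlocks K11 0 0 K22 : Matrix (Fin m ⊕ Fin n) (Fin m ⊕ Fin n) ℝ)
      = fromBlocks (x • K11) 0 0 (x • K22) := by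
  ext (i | i) (j | j) <;> simp [Matrix.fromBlocks]

lemma thm43_det_split {m n s : ℕ} (h : ℝ) (c : Fin s → ℝ)
    (K11 : Matrix (Fin m) (Fin m) ℝ) (K22 : Matrix (Fin n) (Fin n) ℝ)
    (F1 : Fin s → Matrix (Fin m) (Fin m) ℝ) (F2 : Fin s → Matrix (Fin n) (Fin n) ℝ)
    (G : Fin s → Matrix (Fin n) (Fin m) ℝ)
    (K : Matrix (Fin m ⊕ Fin n) (Fin m ⊕ Fin n) ℝ)
    (hK : K = fromBlocks K11 0 0 K22)
    (F : Fin s → Matrix (Fin m ⊕ Fin n) (Fin m ⊕ Fin n) ℝ)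
    (hF : ∀ i, F i = fromBlocks (F1 i) 0 (G i) (F2 i))
    (A' : Matrix (Fin s) (Fin s) ℝ) (t : ℝ) :
    ((1 : Matrix (Fin s × (Fin m ⊕ Fin n)) (Fin s × (Fin m ⊕ Fin n)) ℝ)
        + t • Mblk h K c A' F).det =
      ((1 : Matrix (Fin s × Fin m) (Fin s × Fin m) ℝ) + t • Mblk h K11 c A' F1).det *
        ((1 : Matrix (Fin s × Fin n) (Fin s × Fin n) ℝ) + t • Mblk h K22 c A' F2).det := by
  have hexpK : ∀ x : ℝ, NormedSpace.exp (x • K)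
      = fromBlocks (NormedSpace.exp (x • K11)) 0 0 (NormedSpace.exp (x • K22)) := by
    intro x
    rw [hK, thm43_smul_fromBlocks, thm43_exp_fromBlocks]
  have hprod : ∀ (j : Fin s) (x : ℝ), NormedSpace.exp (x • K) * F j
      = fromBlocks (NormedSpace.exp (x • K11) * F1 j) 0
          (NormedSpace.exp (x • K22) * G j) (NormedSpace.exp (x • K22) * F2 j) := by
    intro j x
    rw [hexpK, hF, Matrix.fromBlocks_multiply]
    simp
  rw [← Matrix.det_submatrix_equiv_self (thm43_equiv s m n)]
  have hsub : ((1 : Matrix (Fin s × (Fin m ⊕ Fin n)) (Fin s × (Fin m ⊕ Fin n)) ℝ)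
        + t • Mblk h K c A' F).submatrix (thm43_equiv s m n) (thm43_equiv s m n)
      = fromBlocks
          ((1 : Matrix (Fin s × Fin m) (Fin s × Fin m) ℝ) + t • Mblk h K11 c A' F1) 0
          (Matrix.of fun p q => t * (A' p.1 q.1 *
            (NormedSpace.exp (((c p.1 - c q.1) * h) • K22) * G q.1) p.2 q.2))
          ((1 : Matrix (Fin s × Fin n) (Fin s × Fin n) ℝ) + t • Mblk h K22 c A' F2) := by
    ext (⟨i, p⟩ | ⟨i, p⟩) (⟨j, q⟩ | ⟨j, q⟩) <;>
      simp [Matrix.submatrix_apply, thm43_equiv, Mblk, hprod, Matrix.one_apply, Prod.ext_iff, Matrix.of_apply]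
  rw [hsub, Matrix.det_fromBlocks_zero₁₂]
/-- **Theorem 4.3, algebraic form.** -/
theorem stmt_12 (m n s : ℕ) (h : ℝ) (c : Fin s → ℝ)
    (K11 : Matrix (Fin m) (Fin m) ℝ) (K22 : Matrix (Fin n) (Fin n) ℝ)
    (F1 : Fin s → Matrix (Fin m) (Fin m) ℝ) (F2 : Fin s → Matrix (Fin n) (Fin n) ℝ)
    (G : Fin s → Matrix (Fin n) (Fin m) ℝ)
    (K : Matrix (Fin m ⊕ Fin n) (Fin m ⊕ Fin n) ℝ)
    (hK : K = fromBlocks K11 0 0 K22)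
    (F : Fin s → Matrix (Fin m ⊕ Fin n) (Fin m ⊕ Fin n) ℝ)
    (hF : ∀ i, F i = fromBlocks (F1 i) 0 (G i) (F2 i))
    (A : Matrix (Fin s) (Fin s) ℝ)
    (hVP1 : ((1 : Matrix (Fin s × Fin m) (Fin s × Fin m) ℝ) - h • Mblk h K11 c A F1).det =
      (NormedSpace.exp (h • K11)).det *
        ((1 : Matrix (Fin s × Fin m) (Fin s × Fin m) ℝ) + h • Mblk h K11 c Aᵀ F1).det)
    (P : Matrix (Fin n) (Fin n) ℝ) (hP : IsUnit P)
    (hK22 : P * K22 * P⁻¹ = -K22ᵀ)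
    (hF2 : ∀ i, P * F2 i * P⁻¹ = -(F2 i)ᵀ) :
    ((1 : Matrix (Fin s × (Fin m ⊕ Fin n)) (Fin s × (Fin m ⊕ Fin n)) ℝ) -
        h • Mblk h K c A F).det =
      (NormedSpace.exp (h • K)).det *
        ((1 : Matrix (Fin s × (Fin m ⊕ Fin n)) (Fin s × (Fin m ⊕ Fin n)) ℝ) +
          h • Mblk h K c Aᵀ F).det := by
  have e1 : ((1 : Matrix (Fin s × (Fin m ⊕ Fin n)) (Fin s × (Fin m ⊕ Fin n)) ℝ) -
        h • Mblk h K c A F).det =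
      ((1 : Matrix (Fin s × Fin m) (Fin s × Fin m) ℝ) - h • Mblk h K11 c A F1).det *
        ((1 : Matrix (Fin s × Fin n) (Fin s × Fin n) ℝ) - h • Mblk h K22 c A F2).det := by
    have := thm43_det_split h c K11 K22 F1 F2 G K hK F hF A (-h)
    rw [neg_smul, neg_smul, neg_smul, ← sub_eq_add_neg, ← sub_eq_add_neg,
      ← sub_eq_add_neg] at this
    exact this
  have e2 : ((1 : Matrix (Fin s × (Fin m ⊕ Fin n)) (Fin s × (Fin m ⊕ Fin n)) ℝ) +
        h • Mblk h K c Aᵀ F).det =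
      ((1 : Matrix (Fin s × Fin m) (Fin s × Fin m) ℝ) + h • Mblk h K11 c Aᵀ F1).det *
        ((1 : Matrix (Fin s × Fin n) (Fin s × Fin n) ℝ) + h • Mblk h K22 c Aᵀ F2).det :=
    thm43_det_split h c K11 K22 F1 F2 G K hK F hF Aᵀ h
  have e3 : (NormedSpace.exp (h • K)).det =
      (NormedSpace.exp (h • K11)).det * (NormedSpace.exp (h • K22)).det := by
    rw [hK, thm43_smul_fromBlocks, thm43_exp_fromBlocks, Matrix.det_fromBlocks_zero₁₂]
  have e4 : (NormedSpace.exp (h • K22)).det = 1 := thm43_det_exp_one h K22 P hP hK22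
  have e5 : ((1 : Matrix (Fin s × Fin n) (Fin s × Fin n) ℝ) - h • Mblk h K22 c A F2).det =
      ((1 : Matrix (Fin s × Fin n) (Fin s × Fin n) ℝ) + h • Mblk h K22 c Aᵀ F2).det :=
    thm43_det_skew h c K22 F2 A P hP hK22 hF2
  rw [e1, e5, hVP1, e2, e3, e4]
  ring
end

section
/- (Section 5.1) Let J be an invertible skew-symmetric real n×n matrix, M a symmetric real n×n matrix, and V : ℝ^n → ℝ a twice continuously differentiable function. Set K = J^{−1}·M and g(y) = J^{−1}·∇V(y). Suppose (A,b) is symplectic with b_i ≠ 0 for all i. Then at every point y ∈ ℝ^n where I_{sn} − h·Ā·F(y) is invertible, the special symplectic exponential integrator for y' = K·y + g(y) satisfies det(Dφ_h(y)) = 1; in particular, all special symplectic exponential integrators preserve volume for the system y' = J^{−1}·M·y + J^{−1}·∇V(y). -/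
open Matrix

/-- The Jacobian matrix of a map `f : ℝ^ι → ℝ^ι` at a point `y`. -/
noncomputable def jac {ι : Type*} [Fintype ι] [DecidableEq ι]
    (f : (ι → ℝ) → (ι → ℝ)) (y : ι → ℝ) : Matrix ι ι ℝ :=
  LinearMap.toMatrix' ((fderiv ℝ f y).toLinearMap)

/-- The gradient of a scalar function on `ℝ^n`, in coordinates. -/
noncomputable def grad {n : ℕ} (V : (Fin n → ℝ) → ℝ) (y : Fin n → ℝ) : Fin n → ℝ :=
  fun i => fderiv ℝ V y (Pi.single i 1)

/-- A Runge–Kutta pair `(A, b)` is symplectic. -/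
def IsSymplecticRK {s : ℕ} (A : Matrix (Fin s) (Fin s) ℝ) (b : Fin s → ℝ) : Prop :=
  ∀ i j, b i * A i j + b j * A j i - b i * b j = 0

namespace SEI

section jaclemmas
variable {ι : Type*} [Fintype ι] [DecidableEq ι]

lemma diffAt_mulVec (M : Matrix ι ι ℝ) (f : (ι → ℝ) → (ι → ℝ)) (y : ι → ℝ)
    (hf : DifferentiableAt ℝ f y) :
    DifferentiableAt ℝ (fun z => M.mulVec (f z)) y :=
  (M.mulVecLin.toContinuousLinearMap.differentiable.differentiableAt).comp y hf

lemma jac_mulVec_comp (M : Matrix ι ι ℝ) (f : (ι → ℝ) → (ι → ℝ)) (y : ι → ℝ)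
    (hf : DifferentiableAt ℝ f y) :
    jac (fun z => M.mulVec (f z)) y = M * jac f y := by
  have hM : HasFDerivAt (fun z : ι → ℝ => M.mulVec z)
      (M.mulVecLin.toContinuousLinearMap) (f y) :=
    (M.mulVecLin.toContinuousLinearMap).hasFDerivAt
  have h2 : HasFDerivAt (fun z => M.mulVec (f z))
      ((M.mulVecLin.toContinuousLinearMap).comp (fderiv ℝ f y)) y := hM.comp y hf.hasFDerivAt
  unfold jac
  rw [h2.fderiv]
  show LinearMap.toMatrix' ((M.mulVecLin.toContinuousLinearMap.comp (fderiv ℝ f y)).toLinearMap) = _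
  rw [ContinuousLinearMap.toLinearMap_comp, LinearMap.toMatrix'_comp]
  congr 1
  rw [LinearMap.coe_toContinuousLinearMap, ← Matrix.toLin'_apply', LinearMap.toMatrix'_toLin']

lemma jac_mulVec (M : Matrix ι ι ℝ) (y : ι → ℝ) :
    jac (fun z => M.mulVec z) y = M := by
  have := jac_mulVec_comp M id y differentiableAt_id
  simpa [jac, fderiv_id] using this

lemma jac_comp (f g : (ι → ℝ) → (ι → ℝ)) (y : ι → ℝ)
    (hf : DifferentiableAt ℝ f (g y)) (hg : DifferentiableAt ℝ g y) :
    jac (fun z => f (g z)) y = jac f (g y) * jac g y := by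
  have h2 : HasFDerivAt (fun z => f (g z)) ((fderiv ℝ f (g y)).comp (fderiv ℝ g y)) y :=
    hf.hasFDerivAt.comp y hg.hasFDerivAt
  unfold jac
  rw [h2.fderiv, ContinuousLinearMap.toLinearMap_comp, LinearMap.toMatrix'_comp]

lemma jac_add (f g : (ι → ℝ) → (ι → ℝ)) (y : ι → ℝ)
    (hf : DifferentiableAt ℝ f y) (hg : DifferentiableAt ℝ g y) :
    jac (fun z => f z + g z) y = jac f y + jac g y := by
  unfold jac
  rw [fderiv_fun_add hf hg]
  simp [ContinuousLinearMap.coe_add]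

lemma jac_smul (a : ℝ) (f : (ι → ℝ) → (ι → ℝ)) (y : ι → ℝ)
    (hf : DifferentiableAt ℝ f y) :
    jac (fun z => a • f z) y = a • jac f y := by
  unfold jac
  rw [fderiv_fun_const_smul hf]
  simp [ContinuousLinearMap.coe_smul]

lemma jac_sum {κ : Type*} [Fintype κ] (f : κ → (ι → ℝ) → (ι → ℝ)) (y : ι → ℝ)
    (hf : ∀ j, DifferentiableAt ℝ (f j) y) :
    jac (fun z => ∑ j, f j z) y = ∑ j, jac (f j) y := by
  unfold jac
  rw [fderiv_fun_sum (fun j _ => hf j)]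
  simp only [ContinuousLinearMap.coe_sum]
  rw [map_sum]

end jaclemmas

section gradlem
variable {n : ℕ} {V : (Fin n → ℝ) → ℝ}

lemma fderivV_diff (hV : ContDiff ℝ 2 V) : Differentiable ℝ (fun y => fderiv ℝ V y) :=
  (hV.fderiv_right (m := 1) (by norm_num)).differentiable one_ne_zero

lemma grad_diff (hV : ContDiff ℝ 2 V) : Differentiable ℝ (grad V) := by
  intro y
  apply differentiableAt_pi.2
  intro i
  exact (fderivV_diff hV y).clm_apply (differentiableAt_const _)

lemma jac_grad_symm (hV : ContDiff ℝ 2 V) (z : Fin n → ℝ) :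
    (jac (grad V) z)ᵀ = jac (grad V) z := by
  have hd := fderivV_diff hV
  have key : ∀ i j, jac (grad V) z i j
      = fderiv ℝ (fun y => fderiv ℝ V y) z (Pi.single j 1) (Pi.single i 1) := by
    intro i j
    unfold jac
    rw [LinearMap.toMatrix'_apply]
    have hsingle : (fun j' : Fin n => if j' = j then (1:ℝ) else 0) = Pi.single j 1 := by
      ext j'; simp [Pi.single_apply]
    show (fderiv ℝ (grad V) z) (Pi.single j 1) i = _
    have h1 : fderiv ℝ (grad V) z = ContinuousLinearMap.pi
        (fun i => fderiv ℝ (fun y => grad V y i) z) := by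
      apply fderiv_pi
      intro i
      exact (hd z).clm_apply (differentiableAt_const _)
    rw [h1]
    show fderiv ℝ (fun y => grad V y i) z (Pi.single j 1) = _
    have h2 : fderiv ℝ (fun y => grad V y i) z
        = (fderiv ℝ V z).comp (fderiv ℝ (fun _ : Fin n → ℝ => Pi.single i (1:ℝ)) z)
          + (fderiv ℝ (fun y => fderiv ℝ V y) z).flip (Pi.single i 1) :=
      fderiv_clm_apply (hd z) (differentiableAt_const _)
    rw [h2]
    simp
  have symm := second_derivative_symmetric (f := V) (f' := fun y => fderiv ℝ V y)
    (f'' := fderiv ℝ (fun y => fderiv ℝ V y) z) (x := z)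
    (fun y => (hV.differentiable (by norm_num) y).hasFDerivAt) (hd z).hasFDerivAt
  ext i j
  rw [Matrix.transpose_apply, key, key, symm]

end gradlem

section expsec
variable {n : ℕ}

lemma P_mul (K : Matrix (Fin n) (Fin n) ℝ) (a b : ℝ) :
    NormedSpace.exp (a • K) * NormedSpace.exp (b • K) = NormedSpace.exp ((a + b) • K) := by
  rw [add_smul]
  exact (Matrix.exp_add_of_commute _ _ (((Commute.refl K).smul_left a).smul_right b)).symm

lemma P_zero (K : Matrix (Fin n) (Fin n) ℝ) :
    NormedSpace.exp ((0:ℝ) • K) = 1 := by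
  rw [zero_smul]; exact NormedSpace.exp_zero

lemma P_inv (K : Matrix (Fin n) (Fin n) ℝ) (a : ℝ) :
    NormedSpace.exp (a • K) * NormedSpace.exp ((-a) • K) = 1 := by
  rw [P_mul]; simp [P_zero]

lemma Kt (J M K : Matrix (Fin n) (Fin n) ℝ) (hJ : IsUnit J) (hJskew : Jᵀ = -J)
    (hM : Mᵀ = M) (hK : K = J⁻¹ * M) : Kᵀ = -(M * J⁻¹) := by
  have hJJ : J * J⁻¹ = 1 := Matrix.mul_nonsing_inv J ((Matrix.isUnit_iff_isUnit_det J).1 hJ)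
  have hneg : (-J)⁻¹ = -(J⁻¹) := by
    apply Matrix.inv_eq_right_inv
    rw [Matrix.neg_mul, Matrix.mul_neg, neg_neg, hJJ]
  rw [hK, Matrix.transpose_mul, Matrix.transpose_nonsing_inv, hJskew, hM, hneg, Matrix.mul_neg]

lemma P_transpose (J M K : Matrix (Fin n) (Fin n) ℝ) (hJ : IsUnit J) (hJskew : Jᵀ = -J)
    (hM : Mᵀ = M) (hK : K = J⁻¹ * M) (t : ℝ) :
    (NormedSpace.exp (t • K))ᵀ = J * NormedSpace.exp ((-t) • K) * J⁻¹ := by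
  have hJJ : J * J⁻¹ = 1 := Matrix.mul_nonsing_inv J ((Matrix.isUnit_iff_isUnit_det J).1 hJ)
  rw [← Matrix.exp_transpose]
  have h1 : (t • K)ᵀ = J * ((-t) • K) * J⁻¹ := by
    rw [Matrix.transpose_smul, Kt J M K hJ hJskew hM hK, Matrix.mul_smul, Matrix.smul_mul, hK,
      show J * (J⁻¹ * M) = M by rw [← Matrix.mul_assoc, hJJ, Matrix.one_mul],
      neg_smul, smul_neg]
  rw [h1, Matrix.exp_conj _ _ hJ]

lemma P_det (J M K : Matrix (Fin n) (Fin n) ℝ) (hJ : IsUnit J) (hJskew : Jᵀ = -J)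
    (hM : Mᵀ = M) (hK : K = J⁻¹ * M) (t : ℝ) :
    (NormedSpace.exp (t • K)).det = 1 := by
  have hdJ : IsUnit J.det := (Matrix.isUnit_iff_isUnit_det J).1 hJ
  set f : ℝ → ℝ := fun u => (NormedSpace.exp (u • K)).det with hf
  have hsq : ∀ u : ℝ, f u * f u = 1 := by
    intro u
    have h1 : f u * f (-u) = 1 := by
      show (NormedSpace.exp (u • K)).det * (NormedSpace.exp ((-u) • K)).det = 1
      rw [← Matrix.det_mul, P_inv, Matrix.det_one]
    have h2 : f (-u) = f u := by
      show (NormedSpace.exp ((-u) • K)).det = (NormedSpace.exp (u • K)).det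
      calc (NormedSpace.exp ((-u) • K)).det
          = ((NormedSpace.exp ((-u) • K))ᵀ).det := (Matrix.det_transpose _).symm
        _ = (J * NormedSpace.exp (u • K) * J⁻¹).det := by
            rw [P_transpose J M K hJ hJskew hM hK, neg_neg]
        _ = J.det * (NormedSpace.exp (u • K)).det * J.det⁻¹ := by
            rw [Matrix.det_mul, Matrix.det_mul, Matrix.det_nonsing_inv, Ring.inverse_eq_inv']
        _ = (NormedSpace.exp (u • K)).det * (J.det * J.det⁻¹) := by ring
        _ = (NormedSpace.exp (u • K)).det := by
            rw [mul_inv_cancel₀ hdJ.ne_zero, mul_one]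
    rw [← h2] at h1 ⊢; exact h1
  have hne : ∀ u : ℝ, f u ≠ 0 := by
    intro u hu
    have := hsq u
    rw [hu, mul_zero] at this
    exact zero_ne_one this
  have hcont : Continuous f := by
    letI : SeminormedRing (Matrix (Fin n) (Fin n) ℝ) := Matrix.linftyOpSemiNormedRing
    letI : NormedRing (Matrix (Fin n) (Fin n) ℝ) := Matrix.linftyOpNormedRing
    letI : NormedAlgebra ℝ (Matrix (Fin n) (Fin n) ℝ) := Matrix.linftyOpNormedAlgebra
    letI : NormedAlgebra ℚ (Matrix (Fin n) (Fin n) ℝ) := Matrix.linftyOpNormedAlgebra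
    exact (Continuous.matrix_det continuous_id).comp
      (NormedSpace.exp_continuous.comp (continuous_id.smul continuous_const))
  have hf0 : f 0 = 1 := by
    show (NormedSpace.exp ((0:ℝ) • K)).det = 1
    rw [P_zero, Matrix.det_one]
  by_contra hft
  have hneg1 : f t = -1 := by
    rcases mul_self_eq_one_iff.1 (hsq t) with h | h
    · exact absurd h hft
    · exact h
  have h0mem : (0:ℝ) ∈ Set.uIcc (f 0) (f t) := by
    rw [hf0, hneg1]
    constructor <;> simp [min_le_iff, le_max_iff]
  obtain ⟨u, _, hu⟩ := intermediate_value_uIcc (hcont.continuousOn (s := Set.uIcc 0 t)) h0mem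
  exact hne u hu

end expsec

section blocks
variable {n s : ℕ}

def bm (M : Fin s → Fin s → Matrix (Fin n) (Fin n) ℝ) :
    Matrix (Fin s × Fin n) (Fin s × Fin n) ℝ := fun p q => M p.1 q.1 p.2 q.2

def bc (U : Fin s → Matrix (Fin n) (Fin n) ℝ) :
    Matrix (Fin s × Fin n) (Fin n) ℝ := fun p q => U p.1 p.2 q

def br (U : Fin s → Matrix (Fin n) (Fin n) ℝ) :
    Matrix (Fin n) (Fin s × Fin n) ℝ := fun p q => U q.1 p q.2

lemma bm_congr {M N : Fin s → Fin s → Matrix (Fin n) (Fin n) ℝ}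
    (hpt : ∀ i j, M i j = N i j) : bm M = bm N := by
  have : M = N := funext fun i => funext fun j => hpt i j
  rw [this]

lemma bc_congr {U W : Fin s → Matrix (Fin n) (Fin n) ℝ}
    (hpt : ∀ i, U i = W i) : bc U = bc W := by
  have : U = W := funext hpt
  rw [this]

lemma bm_mul (M N : Fin s → Fin s → Matrix (Fin n) (Fin n) ℝ) :
    bm M * bm N = bm (fun i j => ∑ l, M i l * N l j) := by
  ext p q
  simp only [bm, Matrix.mul_apply, Fintype.sum_prod_type, Matrix.sum_apply]

lemma bm_mul_bc (M : Fin s → Fin s → Matrix (Fin n) (Fin n) ℝ)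
    (U : Fin s → Matrix (Fin n) (Fin n) ℝ) :
    bm M * bc U = bc (fun i => ∑ l, M i l * U l) := by
  ext p q
  simp only [bm, bc, Matrix.mul_apply, Fintype.sum_prod_type, Matrix.sum_apply]

lemma br_mul_bc (W U : Fin s → Matrix (Fin n) (Fin n) ℝ) :
    br W * bc U = ∑ l, W l * U l := by
  ext p q
  simp only [br, bc, Matrix.mul_apply, Fintype.sum_prod_type, Matrix.sum_apply]

lemma bc_mul_br (U W : Fin s → Matrix (Fin n) (Fin n) ℝ) :
    bc U * br W = bm (fun i j => U i * W j) := by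
  ext p q
  simp only [bm, bc, br, Matrix.mul_apply]

lemma bm_one : (1 : Matrix (Fin s × Fin n) (Fin s × Fin n) ℝ)
    = bm (fun i j => if i = j then 1 else 0) := by
  ext p q
  rcases p with ⟨i, a⟩; rcases q with ⟨j, b⟩
  simp only [bm, Matrix.one_apply, Prod.mk.injEq]
  by_cases hij : i = j
  · subst hij
    by_cases hab : a = b <;> simp [hab, Matrix.one_apply]
  · simp [hij]

lemma bm_smul (a : ℝ) (M : Fin s → Fin s → Matrix (Fin n) (Fin n) ℝ) :
    a • bm M = bm (fun i j => a • M i j) := rfl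

lemma bm_sub (M N : Fin s → Fin s → Matrix (Fin n) (Fin n) ℝ) :
    bm M - bm N = bm (fun i j => M i j - N i j) := rfl

lemma bm_add (M N : Fin s → Fin s → Matrix (Fin n) (Fin n) ℝ) :
    bm M + bm N = bm (fun i j => M i j + N i j) := rfl

lemma bm_transpose (M : Fin s → Fin s → Matrix (Fin n) (Fin n) ℝ) :
    (bm M)ᵀ = bm (fun i j => (M j i)ᵀ) := rfl

lemma bc_smul (a : ℝ) (U : Fin s → Matrix (Fin n) (Fin n) ℝ) :
    a • bc U = bc (fun i => a • U i) := rfl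

lemma bc_sub (U W : Fin s → Matrix (Fin n) (Fin n) ℝ) :
    bc U - bc W = bc (fun i => U i - W i) := rfl

lemma bmdiag_mul (Dg : Fin s → Matrix (Fin n) (Fin n) ℝ)
    (N : Fin s → Fin s → Matrix (Fin n) (Fin n) ℝ) :
    bm (fun i j => if i = j then Dg i else 0) * bm N = bm (fun i j => Dg i * N i j) := by
  rw [bm_mul]
  apply bm_congr
  intro i j
  simp [ite_mul, Finset.sum_ite_eq, zero_mul]

lemma mul_bmdiag (N : Fin s → Fin s → Matrix (Fin n) (Fin n) ℝ)
    (Dg : Fin s → Matrix (Fin n) (Fin n) ℝ) :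
    bm N * bm (fun i j => if i = j then Dg i else 0) = bm (fun i j => N i j * Dg j) := by
  rw [bm_mul]
  apply bm_congr
  intro i j
  rw [Finset.sum_eq_single j]
  · simp
  · intro l _ hl
    simp [hl]
  · intro hl; exact absurd (Finset.mem_univ j) hl

lemma bmdiag_mul_bmdiag (Dg Hg : Fin s → Matrix (Fin n) (Fin n) ℝ) :
    bm (fun i j => if i = j then Dg i else 0) * bm (fun i j => if i = j then Hg i else 0)
      = bm (fun i j => if i = j then Dg i * Hg i else 0) := by
  rw [bmdiag_mul]
  apply bm_congr
  intro i j
  by_cases hij : i = j <;> simp [hij]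

lemma bmdiag_mul_bc (Dg : Fin s → Matrix (Fin n) (Fin n) ℝ)
    (U : Fin s → Matrix (Fin n) (Fin n) ℝ) :
    bm (fun i j => if i = j then Dg i else 0) * bc U = bc (fun i => Dg i * U i) := by
  rw [bm_mul_bc]
  apply bc_congr
  intro i
  simp [ite_mul, Finset.sum_ite_eq, zero_mul]

end blocks

end SEI

/-- **Section 5.1.** All special symplectic exponential integrators preserve volume
for the system `y' = J⁻¹·M·y + J⁻¹·∇V(y)` with `J` invertible skew-symmetric and
`M` symmetric. -/
theorem stmt_18 (n s : ℕ) (h : ℝ) (c : Fin s → ℝ)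
    (J M : Matrix (Fin n) (Fin n) ℝ) (hJ : IsUnit J) (hJskew : Jᵀ = -J)
    (hM : Mᵀ = M)
    (V : (Fin n → ℝ) → ℝ) (hV : ContDiff ℝ 2 V)
    (K : Matrix (Fin n) (Fin n) ℝ) (hK : K = J⁻¹ * M)
    (g : (Fin n → ℝ) → (Fin n → ℝ)) (hg : ∀ y, g y = J⁻¹.mulVec (grad V y))
    (A : Matrix (Fin s) (Fin s) ℝ) (b : Fin s → ℝ)
    (hsymp : IsSymplecticRK A b) (hb : ∀ i, b i ≠ 0)
    (k : Fin s → (Fin n → ℝ) → (Fin n → ℝ))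
    (hk : ∀ i, Differentiable ℝ (k i))
    (hkdef : ∀ i y, k i y =
      (NormedSpace.exp ((c i * h) • K)).mulVec y +
        h • ∑ j, (A i j • NormedSpace.exp (((c i - c j) * h) • K)).mulVec (g (k j y)))
    (φ : (Fin n → ℝ) → (Fin n → ℝ))
    (hφ : ∀ y, φ y =
      (NormedSpace.exp (h • K)).mulVec y +
        h • ∑ i, (b i • NormedSpace.exp (((1 - c i) * h) • K)).mulVec (g (k i y)))
    (F : (Fin n → ℝ) → Matrix (Fin s × Fin n) (Fin s × Fin n) ℝ)
    (hF : ∀ y p q, F y p q = if p.1 = q.1 then jac g (k p.1 y) p.2 q.2 else 0)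
    (Ablk : Matrix (Fin s × Fin n) (Fin s × Fin n) ℝ)
    (hAblk : ∀ p q, Ablk p q =
      A p.1 q.1 * NormedSpace.exp (((c p.1 - c q.1) * h) • K) p.2 q.2) :
    ∀ y : Fin n → ℝ,
      IsUnit ((1 : Matrix (Fin s × Fin n) (Fin s × Fin n) ℝ) - h • (Ablk * F y)) →
        (jac φ y).det = 1 := by
  intro y hUnit
  -- abbreviation for the matrix exponential
  set E : ℝ → Matrix (Fin n) (Fin n) ℝ := fun t => NormedSpace.exp (t • K) with hEdef
  have hEmul : ∀ a b : ℝ, E a * E b = E (a + b) := fun a b => SEI.P_mul K a b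
  have hEinv : ∀ a : ℝ, E a * E (-a) = 1 := fun a => SEI.P_inv K a
  have hEinv' : ∀ a : ℝ, E (-a) * E a = 1 := by
    intro a; have := SEI.P_inv K (-a); rw [neg_neg] at this; exact this
  -- differentiability of g
  have hgfun : g = fun z => J⁻¹.mulVec (grad V z) := funext hg
  have hgd : Differentiable ℝ g := by
    rw [hgfun]
    exact fun z => SEI.diffAt_mulVec _ _ _ (SEI.grad_diff hV z)
  -- stage and update Jacobians
  set G : Fin s → Matrix (Fin n) (Fin n) ℝ := fun i => jac g (k i y) with hGdef
  set D : Fin s → Matrix (Fin n) (Fin n) ℝ := fun i => jac (k i) y with hDdef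
  have hsummand : ∀ (i j : Fin s), DifferentiableAt ℝ
      (fun z => (A i j • E ((c i - c j) * h)).mulVec (g (k j z))) y :=
    fun i j => SEI.diffAt_mulVec _ _ _ ((hgd (k j y)).comp y ((hk j) y))
  have hD : ∀ i, D i = E (c i * h)
      + h • ∑ j, A i j • (E ((c i - c j) * h) * (G j * D j)) := by
    intro i
    have hki : (k i) = fun z => (E (c i * h)).mulVec z
        + h • ∑ j, (A i j • E ((c i - c j) * h)).mulVec (g (k j z)) := funext (hkdef i)
    show jac (k i) y = _
    rw [hki]
    rw [SEI.jac_add (fun z => (E (c i * h)).mulVec z)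
      (fun z => h • ∑ j, (A i j • E ((c i - c j) * h)).mulVec (g (k j z))) y
      (SEI.diffAt_mulVec _ _ _ differentiableAt_fun_id)
      ((DifferentiableAt.fun_sum (fun j _ => hsummand i j)).const_smul h)]
    rw [SEI.jac_mulVec]
    rw [SEI.jac_smul h _ y (DifferentiableAt.fun_sum (fun j _ => hsummand i j))]
    rw [SEI.jac_sum _ y (fun j => hsummand i j)]
    congr 1
    refine congrArg (fun X => h • X) (Finset.sum_congr rfl fun j _ => ?_)
    rw [SEI.jac_mulVec_comp _ (fun z => g (k j z)) y ((hgd (k j y)).comp y ((hk j) y))]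
    rw [SEI.jac_comp g (k j) y (hgd (k j y)) ((hk j) y)]
    rw [Matrix.smul_mul]
  have hφjac : jac φ y = E h
      + h • ∑ i, b i • (E ((1 - c i) * h) * (G i * D i)) := by
    have hφf : φ = fun z => (E h).mulVec z
        + h • ∑ i, (b i • E ((1 - c i) * h)).mulVec (g (k i z)) := funext hφ
    rw [hφf]
    have hsummand2 : ∀ (i : Fin s), DifferentiableAt ℝ
        (fun z => (b i • E ((1 - c i) * h)).mulVec (g (k i z))) y :=
      fun i => SEI.diffAt_mulVec _ _ _ ((hgd (k i y)).comp y ((hk i) y))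
    rw [SEI.jac_add (fun z => (E h).mulVec z)
      (fun z => h • ∑ i, (b i • E ((1 - c i) * h)).mulVec (g (k i z))) y
      (SEI.diffAt_mulVec _ _ _ differentiableAt_fun_id)
      ((DifferentiableAt.fun_sum (fun i _ => hsummand2 i)).const_smul h)]
    rw [SEI.jac_mulVec]
    rw [SEI.jac_smul h _ y (DifferentiableAt.fun_sum (fun i _ => hsummand2 i))]
    rw [SEI.jac_sum _ y (fun i => hsummand2 i)]
    congr 1
    refine congrArg (fun X => h • X) (Finset.sum_congr rfl fun i _ => ?_)
    rw [SEI.jac_mulVec_comp _ (fun z => g (k i z)) y ((hgd (k i y)).comp y ((hk i) y))]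
    rw [SEI.jac_comp g (k i) y (hgd (k i y)) ((hk i) y)]
    rw [Matrix.smul_mul]
  -- twisted stage quantities
  set Gt : Fin s → Matrix (Fin n) (Fin n) ℝ :=
    fun i => E (-(c i * h)) * G i * E (c i * h) with hGtdef
  set U : Fin s → Matrix (Fin n) (Fin n) ℝ :=
    fun i => E (-(c i * h)) * (G i * D i) with hUdef
  have hsplit : ∀ i j : Fin s, E ((c i - c j) * h) = E (c i * h) * E (-(c j * h)) := by
    intro i j; rw [hEmul]; congr 1; ring
  have hstage : ∀ i, U i = Gt i + h • ∑ j, A i j • (Gt i * U j) := by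
    intro i
    show E (-(c i * h)) * (G i * D i) = _
    rw [hD i]
    rw [Matrix.mul_add, Matrix.mul_add, Matrix.mul_smul, Matrix.mul_smul, Finset.mul_sum,
      Finset.mul_sum]
    congr 1
    · rw [← Matrix.mul_assoc]
    refine congrArg (fun X => h • X) (Finset.sum_congr rfl fun j _ => ?_)
    rw [Matrix.mul_smul, Matrix.mul_smul]
    refine congrArg (fun X => A i j • X) ?_
    rw [hsplit i j]
    show E (-(c i * h)) * (G i * (E (c i * h) * E (-(c j * h)) * (G j * D j)))
      = E (-(c i * h)) * G i * E (c i * h) * (E (-(c j * h)) * (G j * D j))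
    simp only [Matrix.mul_assoc]
  have hupdate : jac φ y = E h * (1 + h • ∑ i, b i • U i) := by
    rw [hφjac, Matrix.mul_add, Matrix.mul_one, Matrix.mul_smul, Finset.mul_sum]
    congr 1
    refine congrArg (fun X => h • X) (Finset.sum_congr rfl fun i _ => ?_)
    rw [Matrix.mul_smul]
    refine congrArg (fun X => b i • X) ?_
    show E ((1 - c i) * h) * (G i * D i) = E h * (E (-(c i * h)) * (G i * D i))
    conv_rhs => rw [← Matrix.mul_assoc, hEmul]
    have harith : (1 - c i) * h = h + -(c i * h) := by ring
    rw [harith]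
  -- block matrices
  set GG := SEI.bm (fun i j => if i = j then Gt i else 0) with hGGdef
  set AAb := SEI.bm (fun i j => A i j • (1 : Matrix (Fin n) (Fin n) ℝ)) with hAAdef
  have hGGAA : GG * AAb = SEI.bm (fun i j => A i j • Gt i) := by
    rw [hGGdef, hAAdef, SEI.bmdiag_mul]
    exact SEI.bm_congr fun i j => by rw [Matrix.mul_smul, Matrix.mul_one]
  have hAAGG : AAb * GG = SEI.bm (fun i j => A i j • Gt j) := by
    rw [hGGdef, hAAdef, SEI.mul_bmdiag]
    exact SEI.bm_congr fun i j => by rw [Matrix.smul_mul, Matrix.one_mul]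
  set M1 := (1 : Matrix (Fin s × Fin n) (Fin s × Fin n) ℝ) - h • (GG * AAb) with hM1def
  set M2 := (1 : Matrix (Fin s × Fin n) (Fin s × Fin n) ℝ) - h • (AAb * GG) with hM2def
  -- rewrite the hypothesis matrices in block form
  have hAblk_bm : Ablk = SEI.bm (fun i j => A i j • E ((c i - c j) * h)) := by
    ext p q
    rw [hAblk]
    simp [SEI.bm, Matrix.smul_apply, smul_eq_mul]
    exact Or.inl rfl
  have hF_bm : F y = SEI.bm (fun i j => if i = j then G i else 0) := by
    ext p q
    rw [hF]
    by_cases hpq : p.1 = q.1 <;> simp [SEI.bm, hpq, hGdef]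
  set DD := SEI.bm (fun i j => if i = j then E (c i * h) else 0) with hDDdef
  set DD' := SEI.bm (fun i j => if i = j then E (-(c i * h)) else 0) with hDD'def
  have hDDmul : DD * DD' = 1 := by
    rw [hDDdef, hDD'def, SEI.bmdiag_mul_bmdiag]
    rw [SEI.bm_one]
    exact SEI.bm_congr fun i j => by rw [hEinv (c i * h)]
  have hDD'mul : DD' * DD = 1 := by
    rw [hDDdef, hDD'def, SEI.bmdiag_mul_bmdiag]
    rw [SEI.bm_one]
    exact SEI.bm_congr fun i j => by rw [hEinv' (c i * h)]
  have hDDunit : IsUnit DD := ⟨⟨DD, DD', hDDmul, hDD'mul⟩, rfl⟩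
  have hDD'unit : IsUnit DD' := ⟨⟨DD', DD, hDD'mul, hDDmul⟩, rfl⟩
  have hconj : Ablk * F y = DD * (AAb * GG) * DD' := by
    rw [hAblk_bm, hF_bm, hAAGG, SEI.mul_bmdiag, hDDdef, hDD'def, SEI.bmdiag_mul, SEI.mul_bmdiag]
    refine SEI.bm_congr fun i j => ?_
    rw [Matrix.smul_mul, hsplit i j, Matrix.mul_smul, Matrix.smul_mul]
    refine congrArg (fun X => A i j • X) ?_
    show E (c i * h) * E (-(c j * h)) * G j
      = E (c i * h) * (E (-(c j * h)) * G j * E (c j * h)) * E (-(c j * h))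
    calc E (c i * h) * E (-(c j * h)) * G j
        = E (c i * h) * (E (-(c j * h)) * (G j * (E (c j * h) * E (-(c j * h))))) := by
          rw [hEinv (c j * h), Matrix.mul_one, Matrix.mul_assoc]
      _ = E (c i * h) * (E (-(c j * h)) * G j * E (c j * h)) * E (-(c j * h)) := by
          simp only [Matrix.mul_assoc]
  have hM2eq : M2 = DD' * ((1 : Matrix (Fin s × Fin n) (Fin s × Fin n) ℝ)
      - h • (Ablk * F y)) * DD := by
    rw [hconj, Matrix.mul_sub, Matrix.sub_mul, Matrix.mul_one, hDD'mul, Matrix.mul_smul,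
      Matrix.smul_mul, hM2def]
    congr 2
    calc AAb * GG
        = 1 * (AAb * GG) * 1 := by rw [Matrix.one_mul, Matrix.mul_one]
      _ = DD' * DD * (AAb * GG) * (DD' * DD) := by rw [hDD'mul]
      _ = DD' * (DD * (AAb * GG) * DD') * DD := by simp only [Matrix.mul_assoc]
  have hM2unit : IsUnit M2 := by
    rw [hM2eq]
    exact (hDD'unit.mul hUnit).mul hDDunit
  have hdetM12 : M1.det = M2.det := by
    have e1 : M1 = 1 + GG * ((-h) • AAb) := by
      rw [hM1def, Matrix.mul_smul, neg_smul, sub_eq_add_neg]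
    have e2 : (1 : Matrix (Fin s × Fin n) (Fin s × Fin n) ℝ) + ((-h) • AAb) * GG = M2 := by
      rw [hM2def, Matrix.smul_mul, neg_smul, sub_eq_add_neg]
    rw [e1, ← e2]
    exact Matrix.det_one_add_mul_comm GG ((-h) • AAb)
  have hM1unit : IsUnit M1 := by
    rw [Matrix.isUnit_iff_isUnit_det, hdetM12, ← Matrix.isUnit_iff_isUnit_det]
    exact hM2unit
  -- block stage equation
  set UU := SEI.bc U with hUUdef
  set ee := SEI.bc (fun _ : Fin s => (1 : Matrix (Fin n) (Fin n) ℝ)) with heedef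
  set bb := SEI.br (fun i => b i • (1 : Matrix (Fin n) (Fin n) ℝ)) with hbbdef
  have hGe : GG * ee = SEI.bc Gt := by
    rw [hGGdef, heedef, SEI.bmdiag_mul_bc]
    exact SEI.bc_congr fun i => by rw [Matrix.mul_one]
  have hblockstage : M1 * UU = GG * ee := by
    rw [hM1def, Matrix.sub_mul, Matrix.one_mul, Matrix.smul_mul, hGGAA,
      hUUdef, SEI.bm_mul_bc, hGe, SEI.bc_smul, SEI.bc_sub]
    refine SEI.bc_congr fun i => ?_
    rw [sub_eq_iff_eq_add]
    rw [show (∑ l, (A i l • Gt i) * U l) = ∑ l, A i l • (Gt i * U l) from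
      Finset.sum_congr rfl fun l _ => by rw [Matrix.smul_mul]]
    exact hstage i
  -- determinant chain part 1
  have hsum_bU : (∑ i, b i • U i) = bb * UU := by
    rw [hbbdef, hUUdef, SEI.br_mul_bc]
    exact Finset.sum_congr rfl fun l _ => by rw [Matrix.smul_mul, Matrix.one_mul]
  have hEh : (E h).det = 1 := SEI.P_det J M K hJ hJskew hM hK h
  have hdet0 : (jac φ y).det = (1 + h • (bb * UU)).det := by
    rw [hupdate, Matrix.det_mul, hEh, one_mul, hsum_bU]
  have hswap1 : (1 + h • (bb * UU)).det = (1 + h • (UU * bb)).det := by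
    rw [show (1 : Matrix (Fin n) (Fin n) ℝ) + h • (bb * UU) = 1 + bb * (h • UU) from by
        rw [Matrix.mul_smul],
      show (1 : Matrix (Fin s × Fin n) (Fin s × Fin n) ℝ) + h • (UU * bb)
          = 1 + (h • UU) * bb from by rw [Matrix.smul_mul],
      Matrix.det_one_add_mul_comm]
  have hNdet : M1.det * (1 + h • (UU * bb)).det = (M1 + h • ((GG * ee) * bb)).det := by
    rw [← Matrix.det_mul, Matrix.mul_add, Matrix.mul_one, Matrix.mul_smul, ← Matrix.mul_assoc,
      hblockstage]
  -- part 2 : the symplecticity argument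
  set AAt := SEI.bm (fun i j => A j i • (1 : Matrix (Fin n) (Fin n) ℝ)) with hAAtdef
  have hGGAAt : GG * AAt = SEI.bm (fun i j => A j i • Gt i) := by
    rw [hGGdef, hAAtdef, SEI.bmdiag_mul]
    exact SEI.bm_congr fun i j => by rw [Matrix.mul_smul, Matrix.mul_one]
  set X := (1 : Matrix (Fin s × Fin n) (Fin s × Fin n) ℝ) + h • (GG * AAt) with hXdef
  set Bd := SEI.bm (fun i j => if i = j then b i • (1 : Matrix (Fin n) (Fin n) ℝ) else 0)
    with hBddef
  set Bd' := SEI.bm (fun i j => if i = j then (b i)⁻¹ • (1 : Matrix (Fin n) (Fin n) ℝ) else 0)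
    with hBd'def
  have hBdmul : Bd * Bd' = 1 := by
    rw [hBddef, hBd'def, SEI.bmdiag_mul_bmdiag, SEI.bm_one]
    refine SEI.bm_congr fun i j => ?_
    rw [Matrix.smul_mul, Matrix.mul_smul, Matrix.one_mul, smul_smul,
      mul_inv_cancel₀ (hb i), one_smul]
  have hBd'mul : Bd' * Bd = 1 := by
    rw [hBddef, hBd'def, SEI.bmdiag_mul_bmdiag, SEI.bm_one]
    refine SEI.bm_congr fun i j => ?_
    rw [Matrix.smul_mul, Matrix.mul_smul, Matrix.one_mul, smul_smul,
      inv_mul_cancel₀ (hb i), one_smul]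
  have hNbm : M1 + h • ((GG * ee) * bb)
      = SEI.bm (fun i j => (if i = j then 1 else 0) - (h * A i j) • Gt i + (h * b j) • Gt i) := by
    rw [hM1def, hGGAA, hGe, hbbdef, SEI.bc_mul_br, SEI.bm_one, SEI.bm_smul, SEI.bm_sub,
      SEI.bm_smul, SEI.bm_add]
    refine SEI.bm_congr fun i j => ?_
    rw [smul_smul, Matrix.mul_smul, Matrix.mul_one, smul_smul]
  have hXbm : X = SEI.bm (fun i j => (if i = j then 1 else 0) + (h * A j i) • Gt i) := by
    rw [hXdef, hGGAAt, SEI.bm_one, SEI.bm_smul, SEI.bm_add]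
    exact SEI.bm_congr fun i j => by rw [smul_smul]
  have hBdN : Bd * (M1 + h • ((GG * ee) * bb)) = X * Bd := by
    rw [hNbm, hXbm, hBddef, SEI.bmdiag_mul, SEI.mul_bmdiag]
    refine SEI.bm_congr fun i j => ?_
    simp only [Matrix.smul_mul, Matrix.mul_smul, Matrix.one_mul, Matrix.mul_one]
    by_cases hij : i = j
    · subst hij
      simp only [if_pos rfl]
      match_scalars
      all_goals try ring
      all_goals try linear_combination (-h) * hsymp i i
      all_goals try linear_combination (-2*h) * hsymp i i
      all_goals linear_combination h * hsymp i i
    · simp only [if_neg hij]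
      match_scalars
      all_goals try ring
      all_goals try linear_combination (-h) * hsymp i j
      all_goals try linear_combination (-2*h) * hsymp i j
      all_goals linear_combination h * hsymp i j
  have hdetNX : (M1 + h • ((GG * ee) * bb)).det = X.det := by
    have h1 : Bd.det * (M1 + h • ((GG * ee) * bb)).det = X.det * Bd.det := by
      rw [← Matrix.det_mul, ← Matrix.det_mul, hBdN]
    have hBdunit : Bd.det ≠ 0 := by
      have : IsUnit Bd := ⟨⟨Bd, Bd', hBdmul, hBd'mul⟩, rfl⟩
      exact ((Matrix.isUnit_iff_isUnit_det Bd).1 this).ne_zero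
    rw [mul_comm X.det Bd.det] at h1
    exact (mul_left_cancel₀ hBdunit h1)
  -- part 3 : transpose symmetry of the twisted Jacobians
  have hJJm : J * J⁻¹ = 1 := Matrix.mul_nonsing_inv J ((Matrix.isUnit_iff_isUnit_det J).1 hJ)
  have hJinvJ : J⁻¹ * J = 1 := Matrix.nonsing_inv_mul J ((Matrix.isUnit_iff_isUnit_det J).1 hJ)
  have hnegJ : (-J)⁻¹ = -(J⁻¹) := by
    apply Matrix.inv_eq_right_inv
    rw [Matrix.neg_mul, Matrix.mul_neg, neg_neg, hJJm]
  have hcancelJ : ∀ Z : Matrix (Fin n) (Fin n) ℝ, J⁻¹ * (J * Z) = Z := fun Z => by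
    rw [← Matrix.mul_assoc, hJinvJ, Matrix.one_mul]
  have hjacg : ∀ z, jac g z = J⁻¹ * jac (grad V) z := by
    intro z
    rw [hgfun]
    exact SEI.jac_mulVec_comp _ _ _ (SEI.grad_diff hV z)
  have hGskew : ∀ i, (G i)ᵀ = -(J * G i * J⁻¹) := by
    intro i
    rw [hGdef]
    show (jac g (k i y))ᵀ = -(J * jac g (k i y) * J⁻¹)
    rw [hjacg (k i y), Matrix.transpose_mul, SEI.jac_grad_symm hV,
      Matrix.transpose_nonsing_inv, hJskew, hnegJ, Matrix.mul_neg]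
    rw [← Matrix.mul_assoc, hJJm, Matrix.one_mul]
  have hEt : ∀ t : ℝ, (E t)ᵀ = J * E (-t) * J⁻¹ :=
    fun t => SEI.P_transpose J M K hJ hJskew hM hK t
  have hGt_t : ∀ i, (Gt i)ᵀ = -(J * Gt i * J⁻¹) := by
    intro i
    rw [hGtdef]
    show (E (-(c i * h)) * G i * E (c i * h))ᵀ
      = -(J * (E (-(c i * h)) * G i * E (c i * h)) * J⁻¹)
    rw [Matrix.transpose_mul, Matrix.transpose_mul, hEt, hEt, neg_neg, hGskew i]
    simp only [Matrix.mul_neg, Matrix.neg_mul]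
    refine congrArg Neg.neg ?_
    simp only [Matrix.mul_assoc]
    simp only [hcancelJ]
  -- part 4 : conjugating X to M2
  set JJ : Matrix (Fin s × Fin n) (Fin s × Fin n) ℝ :=
    SEI.bm (fun i j => if i = j then J else 0) with hJJdef
  set JJ' : Matrix (Fin s × Fin n) (Fin s × Fin n) ℝ :=
    SEI.bm (fun i j => if i = j then J⁻¹ else 0) with hJJ'def
  have hJJmul : JJ * JJ' = 1 := by
    rw [hJJdef, hJJ'def, SEI.bmdiag_mul_bmdiag, SEI.bm_one]
    exact SEI.bm_congr fun i j => by rw [hJJm]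
  have hM2bm : M2 = SEI.bm (fun i j => (if i = j then 1 else 0) - (h * A i j) • Gt j) := by
    rw [hM2def, hAAGG, SEI.bm_one, SEI.bm_smul, SEI.bm_sub]
    exact SEI.bm_congr fun i j => by rw [smul_smul]
  have hXt : Xᵀ = JJ * M2 * JJ' := by
    rw [hXbm, SEI.bm_transpose, hM2bm, hJJdef, hJJ'def, SEI.bmdiag_mul, SEI.mul_bmdiag]
    refine SEI.bm_congr fun i j => ?_
    rw [Matrix.transpose_add, Matrix.transpose_smul, hGt_t j]
    rw [Matrix.mul_sub, Matrix.sub_mul, Matrix.mul_smul, Matrix.smul_mul]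
    by_cases hij : i = j
    · subst hij
      simp [hJJm, sub_eq_add_neg, Matrix.mul_assoc]
    · simp [hij, Ne.symm hij, sub_eq_add_neg, Matrix.mul_assoc]
  have hdetXM2 : X.det = M2.det := by
    rw [← Matrix.det_transpose X, hXt, Matrix.det_mul, Matrix.det_mul]
    calc JJ.det * M2.det * JJ'.det = M2.det * (JJ.det * JJ'.det) := by ring
      _ = M2.det * (JJ * JJ').det := by rw [Matrix.det_mul]
      _ = M2.det := by rw [hJJmul, Matrix.det_one, mul_one]
  -- conclusion
  have hfinal : M1.det * (1 + h • (UU * bb)).det = M1.det * 1 := by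
    rw [hNdet, hdetNX, hdetXM2, ← hdetM12, mul_one]
  have hM1ne : M1.det ≠ 0 := ((Matrix.isUnit_iff_isUnit_det M1).1 hM1unit).ne_zero
  have hone : (1 + h • (UU * bb)).det = 1 := mul_left_cancel₀ hM1ne hfinal
  rw [hdet0, hswap1, hone]
end
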